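/- Let δ ∈ ℝ and let n ≥ 1 be an integer. Define ρ_n(δ,t) := ((1-t)^δ − ∑_{k=0}^{n-1} ((-δ)_k / k!) t^k) / t^n for t ∈ (0,1) and ρ_n(δ,0) := (-δ)_n / n!. Then for every t ∈ [0,1), the sign of ρ_n(δ,t) is constant in t and equals the sign of (-δ)_n (where sign 0 := 0); that is, if (-δ)_n > 0 then ρ_n(δ,t) > 0 for all t ∈ [0,1), if (-δ)_n < 0 then ρ_n(δ,t) < 0 for all t ∈ [0,1), and if (-δ)_n = 0 then ρ_n(δ,t) = 0 for all t ∈ [0,1). -/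

import Mathlib

open MeasureTheory Real Filter

noncomputable def poch (a : ℝ) : ℕ → ℝ
  | 0 => 1
  | k + 1 => poch a k * (a + k)

lemma poch_hasDerivAt (δ : ℝ) (k : ℕ) {x : ℝ} (hx : x < 1) :
    HasDerivAt (fun s : ℝ => poch (-δ) k * (1 - s) ^ (δ - k))
      (poch (-δ) (k + 1) * (1 - x) ^ (δ - (k + 1 : ℕ))) x := by
  have h1 : (0:ℝ) < 1 - x := by linarith
  have hu : HasDerivAt (fun s : ℝ => 1 - s) (-1) x := by
    simpa using (hasDerivAt_id x).const_sub 1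
  have hr : HasDerivAt (fun y : ℝ => y ^ (δ - k))
      ((δ - k) * (1 - x) ^ (δ - k - 1)) (1 - x) :=
    Real.hasDerivAt_rpow_const (Or.inl h1.ne')
  have := (hr.comp x hu).const_mul (poch (-δ) k)
  refine HasDerivAt.congr_deriv this ?_
  have : δ - (k + 1 : ℕ) = δ - k - 1 := by push_cast; ring
  rw [this, poch]
  ring

lemma iter_eq (δ t : ℝ) (ht0 : 0 < t) (ht1 : t < 1) (k : ℕ) :
    Set.EqOn (iteratedDerivWithin k (fun s : ℝ => (1 - s) ^ δ) (Set.Icc 0 t))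
      (fun s => poch (-δ) k * (1 - s) ^ (δ - k)) (Set.Icc 0 t) := by
  induction k with
  | zero => intro x hx; simp [poch]
  | succ k ih =>
    intro x hx
    rw [iteratedDerivWithin_succ, derivWithin_congr ih (ih hx)]
    exact ((poch_hasDerivAt δ k (lt_of_le_of_lt hx.2 ht1)).hasDerivWithinAt).derivWithin
      ((uniqueDiffOn_Icc ht0) x hx)

lemma key (δ : ℝ) (n : ℕ) (hn : 1 ≤ n) {t : ℝ} (ht : t ∈ Set.Ico (0:ℝ) 1) :
    ∃ c : ℝ, 0 < c ∧
      (if t = 0 then poch (-δ) n / (n.factorial : ℝ)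
      else ((1 - t) ^ δ -
        ∑ k ∈ Finset.range n, poch (-δ) k / (k.factorial : ℝ) * t ^ k) / t ^ n)
        = poch (-δ) n * c := by
  obtain ⟨m, rfl⟩ : ∃ m, n = m + 1 := ⟨n - 1, (Nat.succ_pred_eq_of_pos hn).symm⟩
  rcases eq_or_lt_of_le ht.1 with h0 | h0
  · refine ⟨((m+1).factorial : ℝ)⁻¹, by positivity, ?_⟩
    rw [if_pos h0.symm]
    field_simp
  have ht1 := ht.2
  rw [if_neg h0.ne']
  set f : ℝ → ℝ := fun s => (1 - s) ^ δ with hf_def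
  have hf : ContDiffOn ℝ m f (Set.Icc 0 t) := by
    intro s hs
    have hs1 : (1:ℝ) - s ≠ 0 := by
      have := hs.2; have := ht1; intro h; nlinarith
    exact ((Real.contDiffAt_rpow_const_of_ne (p := δ) hs1).comp s
      (by fun_prop : ContDiffAt ℝ (↑m) (fun s : ℝ => 1 - s) s)).contDiffWithinAt
  have hf' : DifferentiableOn ℝ (iteratedDerivWithin m f (Set.Icc 0 t)) (Set.Ioo 0 t) := by
    refine DifferentiableOn.congr (f := fun s => poch (-δ) m * (1 - s) ^ (δ - m)) ?_ ?_
    · exact fun x hx => ((poch_hasDerivAt δ m (hx.2.trans ht1)).differentiableAt).differentiableWithinAt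
    · exact fun x hx => iter_eq δ t h0 ht1 m (Set.Ioo_subset_Icc_self hx)
  obtain ⟨x', hx', hEq⟩ := taylor_mean_remainder_lagrange h0.ne (by rwa [Set.uIcc_of_le h0.le])
    (by rwa [Set.uIcc_of_le h0.le, Set.uIoo_of_le h0.le])
  rw [Set.uIcc_of_le h0.le] at hEq
  rw [Set.uIoo_of_le h0.le] at hx'
  have hiter : iteratedDerivWithin (m + 1) f (Set.Icc 0 t) x'
      = poch (-δ) (m + 1) * (1 - x') ^ (δ - (m + 1 : ℕ)) :=
    iter_eq δ t h0 ht1 (m + 1) (Set.Ioo_subset_Icc_self hx')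
  have htaylor : taylorWithinEval f m (Set.Icc 0 t) 0 t
      = ∑ k ∈ Finset.range (m + 1), poch (-δ) k / (k.factorial : ℝ) * t ^ k := by
    rw [taylor_within_apply]
    refine Finset.sum_congr rfl fun k hk => ?_
    rw [iter_eq δ t h0 ht1 k (Set.left_mem_Icc.2 h0.le)]
    simp [Real.one_rpow]
    ring
  rw [hiter, htaylor] at hEq
  refine ⟨(1 - x') ^ (δ - (m + 1 : ℕ)) / ((m+1).factorial : ℝ), ?_, ?_⟩
  · have : (0:ℝ) < 1 - x' := by have := hx'.2; linarith
    positivity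
  · rw [show (1 - t) ^ δ = f t from rfl, hEq]
    have ht0 : t ^ (m + 1) ≠ 0 := pow_ne_zero _ h0.ne'
    field_simp
    ring

theorem taylor_remainder_sign (δ : ℝ) (n : ℕ) (hn : 1 ≤ n) :
    let ρ : ℝ → ℝ := fun t =>
      if t = 0 then poch (-δ) n / (n.factorial : ℝ)
      else ((1 - t) ^ δ -
        ∑ k ∈ Finset.range n, poch (-δ) k / (k.factorial : ℝ) * t ^ k) / t ^ n
    (0 < poch (-δ) n → ∀ t ∈ Set.Ico (0:ℝ) 1, 0 < ρ t) ∧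
    (poch (-δ) n < 0 → ∀ t ∈ Set.Ico (0:ℝ) 1, ρ t < 0) ∧
    (poch (-δ) n = 0 → ∀ t ∈ Set.Ico (0:ℝ) 1, ρ t = 0) := by
  intro ρ
  refine ⟨fun h t ht => ?_, fun h t ht => ?_, fun h t ht => ?_⟩ <;>
    obtain ⟨c, hc, heq⟩ := key δ n hn ht
  · rw [show ρ t = poch (-δ) n * c from heq]; positivity
  · rw [show ρ t = poch (-δ) n * c from heq]; exact mul_neg_of_neg_of_pos h hc
  · rw [show ρ t = poch (-δ) n * c from heq, h, zero_mul]
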